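/- arXiv:1602.01162 — 2 statements merged into one kernel-verified Lean document; each statement's English description precedes it below -/
import Mathlib

section
/- Let D be a strongly connected simple directed graph with vertex set {v_1,…,v_n} such that v_1, v_2, …, v_n is a shortest directed path from v_1 to v_n, and let φ be its Perron vector. Then there exist positive reals f_1, …, f_n with φ(v_i) = f_i·φ(v_n) for each i, f_n = 1, and for every 2 ≤ k ≤ n the recursion f_k = f_{k−1}/d⁺(v_{k−1}) + Σ_{i ≥ k+1, (v_i,v_k)∈E(D)} f_i/d⁺(v_i) holds. -/
namespace PR

/-- Out-degree of `u` in the digraph on vertex set `{1,…,n} ⊆ ℕ` with adjacency `E`. -/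
def outDeg (n : ℕ) (E : ℕ → ℕ → Bool) (u : ℕ) : ℕ :=
  ((Finset.Icc 1 n).filter (fun v => E u v)).card

/-- In-degree of `u`. -/
def inDeg (n : ℕ) (E : ℕ → ℕ → Bool) (u : ℕ) : ℕ :=
  ((Finset.Icc 1 n).filter (fun v => E v u)).card

/-- `E` is a simple digraph on the vertex set `{1,…,n}`: all edges join distinct
vertices of `{1,…,n}` (no loops; the `Bool`-valued adjacency precludes multi-edges). -/
def IsDigraph (n : ℕ) (E : ℕ → ℕ → Bool) : Prop :=
  ∀ u v, E u v = true → u ∈ Finset.Icc 1 n ∧ v ∈ Finset.Icc 1 n ∧ u ≠ v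

/-- `WalkLen E k u v` : there is a directed walk of length `k` from `u` to `v`. -/
def WalkLen (E : ℕ → ℕ → Bool) : ℕ → ℕ → ℕ → Prop
  | 0, u, v => u = v
  | (k+1), u, v => ∃ w, E u w = true ∧ WalkLen E k w v

/-- Every vertex reaches every other vertex by a directed walk. -/
def StronglyConnected (n : ℕ) (E : ℕ → ℕ → Bool) : Prop :=
  ∀ u ∈ Finset.Icc 1 n, ∀ v ∈ Finset.Icc 1 n, ∃ k, WalkLen E k u v

/-- Directed distance: number of edges in a shortest directed path from `u` to `v`. -/
noncomputable def dist (E : ℕ → ℕ → Bool) (u v : ℕ) : ℕ :=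
  sInf {k | WalkLen E k u v}

/-- Distance between two sets of vertices. -/
noncomputable def setDist (E : ℕ → ℕ → Bool) (A B : Set ℕ) : ℕ :=
  sInf {k | ∃ a ∈ A, ∃ b ∈ B, dist E a b = k}

/-- `φ` is the Perron vector of the simple random walk on the digraph: a positive
probability distribution on `{1,…,n}` which is stationary, i.e. `φ P = φ` where
`P(u,v) = 1/d⁺(u)` for edges `(u,v)` and `0` otherwise. -/
def IsPerron (n : ℕ) (E : ℕ → ℕ → Bool) (φ : ℕ → ℝ) : Prop :=
  (∀ v ∈ Finset.Icc 1 n, 0 < φ v) ∧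
  (∑ v ∈ Finset.Icc 1 n, φ v = 1) ∧
  (∀ v ∈ Finset.Icc 1 n, φ v =
    ∑ u ∈ Finset.Icc 1 n, if E u v then φ u / (outDeg n E u : ℝ) else 0)

/-- The principal ratio `γ = (max_u φ(u)) / (min_u φ(u))` of a vector `φ` on `{1,…,n}`. -/
noncomputable def pratio (n : ℕ) (φ : ℕ → ℝ) : ℝ :=
  if h : (Finset.Icc 1 n).Nonempty then
    ((Finset.Icc 1 n).sup' h φ) / ((Finset.Icc 1 n).inf' h φ)
  else 0

/-- Vertices attaining the maximum of `φ`. -/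
def Vmax (n : ℕ) (φ : ℕ → ℝ) : Set ℕ :=
  {v | v ∈ Finset.Icc 1 n ∧ ∀ u ∈ Finset.Icc 1 n, φ u ≤ φ v}

/-- Vertices attaining the minimum of `φ`. -/
def Vmin (n : ℕ) (φ : ℕ → ℝ) : Set ℕ :=
  {v | v ∈ Finset.Icc 1 n ∧ ∀ u ∈ Finset.Icc 1 n, φ v ≤ φ u}

lemma walkLen_trans (E : ℕ → ℕ → Bool) :
    ∀ k1 {k2 u v w}, WalkLen E k1 u v → WalkLen E k2 v w → WalkLen E (k1 + k2) u w := by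
  intro k1
  induction k1 with
  | zero =>
    intro k2 u v w h1 h2
    cases h1
    simpa using h2
  | succ m ih =>
    intro k2 u v w h1 h2
    obtain ⟨x, hx, hw⟩ := h1
    rw [Nat.add_right_comm]
    exact ⟨x, hx, ih hw h2⟩

lemma walk_path (n : ℕ) (E : ℕ → ℕ → Bool)
    (hpath : ∀ i, 1 ≤ i → i < n → E i (i+1) = true) :
    ∀ d a, 1 ≤ a → a + d ≤ n → WalkLen E d a (a + d) := by
  intro d
  induction d with
  | zero => intro a _ _; rfl
  | succ m ih =>
    intro a ha han
    refine ⟨a + 1, hpath a ha (by omega), ?_⟩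
    have := ih (a + 1) (by omega) (by omega)
    rwa [show a + 1 + m = a + (m + 1) from by omega] at this

/-- If `v_1,…,v_n` is a shortest path from `v_1` to `v_n` and `φ` the Perron
vector, then there exist positive `f_i` with `φ(v_i) = f_i φ(v_n)`, `f_n = 1`,
satisfying the recursion
`f_k = f_{k-1}/d⁺(v_{k-1}) + ∑_{i ≥ k+1, (v_i,v_k) ∈ E} f_i / d⁺(v_i)`. -/
theorem stmt6 (n : ℕ) (hn : 1 ≤ n) (E : ℕ → ℕ → Bool) (φ : ℕ → ℝ)
    (hD : IsDigraph n E) (hSC : StronglyConnected n E) (hφ : IsPerron n E φ)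
    (hpath : ∀ i, 1 ≤ i → i < n → E i (i+1) = true)
    (hshort : dist E 1 n = n - 1) :
    ∃ f : ℕ → ℝ,
      (∀ i ∈ Finset.Icc 1 n, 0 < f i) ∧
      (∀ i ∈ Finset.Icc 1 n, φ i = f i * φ n) ∧
      f n = 1 ∧
      (∀ k, 2 ≤ k → k ≤ n →
        f k = f (k-1) / (outDeg n E (k-1) : ℝ) +
          ∑ i ∈ (Finset.Icc (k+1) n).filter (fun i => E i k),
            f i / (outDeg n E i : ℝ)) := by
  have hnmem : n ∈ Finset.Icc 1 n := by simp [hn]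
  have hφn : 0 < φ n := hφ.1 n hnmem
  refine ⟨fun i => φ i / φ n, ?_, ?_, ?_, ?_⟩
  · intro i hi
    exact div_pos (hφ.1 i hi) hφn
  · intro i hi
    rw [div_mul_cancel₀ _ hφn.ne']
  · exact div_self hφn.ne'
  · intro k hk2 hkn
    -- no edges into k from vertices ≤ k-2
    have hA : ∀ i, 1 ≤ i → i ≤ k - 2 → E i k = false := by
      intro i hi1 hik
      by_contra hE
      rw [Bool.not_eq_false] at hE
      have w1 : WalkLen E (i - 1) 1 i := by
        have := walk_path n E hpath (i - 1) 1 le_rfl (by omega)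
        rwa [show 1 + (i - 1) = i from by omega] at this
      have w2 : WalkLen E 1 i k := ⟨k, hE, rfl⟩
      have w3 : WalkLen E (n - k) k n := by
        have := walk_path n E hpath (n - k) k (by omega) (by omega)
        rwa [show k + (n - k) = n from by omega] at this
      have w : WalkLen E ((i - 1) + (1 + (n - k))) 1 n :=
        walkLen_trans E _ w1 (walkLen_trans E _ w2 w3)
      have hle : dist E 1 n ≤ (i - 1) + (1 + (n - k)) := Nat.sInf_le w
      rw [hshort] at hle
      omega
    have hEk : E k k = false := by
      by_contra h
      rw [Bool.not_eq_false] at h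
      exact (hD k k h).2.2 rfl
    have hEpred : E (k - 1) k = true := by
      have := hpath (k - 1) (by omega) (by omega)
      rwa [show k - 1 + 1 = k from by omega] at this
    set g : ℕ → ℝ := fun u => if E u k then φ u / (outDeg n E u : ℝ) else 0 with hg
    have hφk : φ k = ∑ u ∈ Finset.Icc 1 n, g u := hφ.2.2 k (by simp; omega)
    -- split the sum
    have hsplit1 : ∑ u ∈ Finset.Ioc 0 (k-1), g u + ∑ u ∈ Finset.Ioc (k-1) n, g u
        = ∑ u ∈ Finset.Ioc 0 n, g u :=
      Finset.sum_Ioc_consecutive _ (by omega) (by omega)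
    have hsplit2 : ∑ u ∈ Finset.Ioc (k-1) k, g u + ∑ u ∈ Finset.Ioc k n, g u
        = ∑ u ∈ Finset.Ioc (k-1) n, g u :=
      Finset.sum_Ioc_consecutive _ (by omega) (by omega)
    have hIcc : Finset.Icc 1 n = Finset.Ioc 0 n := by
      ext x; simp [Nat.lt_iff_add_one_le]
    have hsum1 : ∑ u ∈ Finset.Ioc 0 (k-1), g u = φ (k-1) / (outDeg n E (k-1) : ℝ) := by
      rw [Finset.sum_eq_single_of_mem (k-1) (by simp; omega)]
      · simp [hg, hEpred]
      · intro u hu hne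
        simp only [Finset.mem_Ioc] at hu
        simp [hg, hA u (by omega) (by omega)]
    have hsingle : Finset.Ioc (k-1) k = {k} := by
      ext x; simp; omega
    have hsum2 : ∑ u ∈ Finset.Ioc (k-1) k, g u = 0 := by
      rw [hsingle, Finset.sum_singleton]
      simp [hg, hEk]
    have hIoc3 : Finset.Ioc k n = Finset.Icc (k+1) n := by
      ext x; simp
    have hsum3 : ∑ u ∈ Finset.Ioc k n, g u
        = ∑ i ∈ (Finset.Icc (k+1) n).filter (fun i => E i k), φ i / (outDeg n E i : ℝ) := by
      rw [hIoc3, Finset.sum_filter]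
    have key : φ k = φ (k-1) / (outDeg n E (k-1) : ℝ)
        + ∑ i ∈ (Finset.Icc (k+1) n).filter (fun i => E i k), φ i / (outDeg n E i : ℝ) := by
      rw [hφk, hIcc, ← hsplit1, ← hsplit2, hsum1, hsum2, hsum3]; ring
    have hterm : ∀ i : ℕ, φ i / φ n / (outDeg n E i : ℝ) = φ i / (outDeg n E i : ℝ) / φ n :=
      fun i => div_right_comm _ _ _
    simp only [hterm]
    rw [← Finset.sum_div, ← add_div, ← key]

end PR
end

section
/- Let D and D′ be strongly connected simple directed graphs on the same vertex set {v_1,…,v_n}, in both of which v_1,…,v_n is a shortest directed path from v_1 to v_n, with Perron vectors φ and ψ respectively. Set f_i = φ(v_i)/φ(v_n) and g_i = ψ(v_i)/ψ(v_n). Suppose there is some 1 ≤ s ≤ n−1 such that d⁺_D(v_i) = d⁺_{D′}(v_i) for every s ≤ i ≤ n, and such that for every s+1 ≤ k ≤ n the sets {i ≥ k+1 : (v_i,v_k)∈E(D)} and {i ≥ k+1 : (v_i,v_k)∈E(D′)} coincide. Then f_i = g_i for every s ≤ i ≤ n. -/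
namespace PR

lemma walk_trans {E : ℕ → ℕ → Bool} :
    ∀ {a : ℕ} {b u v w : ℕ}, WalkLen E a u v → WalkLen E b v w → WalkLen E (a + b) u w := by
  intro a
  induction a with
  | zero =>
    intro b u v w h1 h2
    have : u = v := h1
    subst this
    simpa using h2
  | succ a ih =>
    intro b u v w h1 h2
    obtain ⟨x, hx, hw⟩ := h1
    rw [Nat.succ_add]
    exact ⟨x, hx, ih hw h2⟩

lemma walk_path_s7 {n : ℕ} {E : ℕ → ℕ → Bool}
    (hpath : ∀ i, 1 ≤ i → i < n → E i (i+1) = true)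
    {a b : ℕ} (ha : 1 ≤ a) (hab : a ≤ b) (hbn : b ≤ n) : WalkLen E (b - a) a b := by
  induction b, hab using Nat.le_induction with
  | base =>
    rw [Nat.sub_self]
    exact rfl
  | succ b hab ih =>
    have w1 := ih (by omega)
    have edge : E b (b+1) = true := hpath b (ha.trans hab) (by omega)
    have w2 : WalkLen E 1 b (b+1) := ⟨b+1, edge, rfl⟩
    have := walk_trans w1 w2
    have heq : b + 1 - a = (b - a) + 1 := by omega
    rw [heq]
    exact this

lemma no_jump {n : ℕ} {E : ℕ → ℕ → Bool} (hD : IsDigraph n E)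
    (hpath : ∀ i, 1 ≤ i → i < n → E i (i+1) = true)
    (hshort : dist E 1 n = n - 1) {i j : ℕ} (hij : E i j = true) : j ≤ i + 1 := by
  by_contra h
  push_neg at h
  obtain ⟨hi, hj, hne⟩ := hD i j hij
  simp only [Finset.mem_Icc] at hi hj
  have w1 : WalkLen E (i - 1) 1 i := walk_path_s7 hpath le_rfl hi.1 hi.2
  have w2 : WalkLen E 1 i j := ⟨j, hij, rfl⟩
  have w3 : WalkLen E (n - j) j n := walk_path_s7 hpath hj.1 hj.2 le_rfl
  have w : WalkLen E ((i - 1) + 1 + (n - j)) 1 n := walk_trans (walk_trans w1 w2) w3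
  have hle : dist E 1 n ≤ (i - 1) + 1 + (n - j) :=
    Nat.sInf_le (show _ ∈ {k | WalkLen E k 1 n} from w)
  rw [hshort] at hle
  omega

lemma outDeg_pos {n : ℕ} {E : ℕ → ℕ → Bool}
    (hpath : ∀ i, 1 ≤ i → i < n → E i (i+1) = true)
    {i : ℕ} (hi1 : 1 ≤ i) (hin : i < n) : 0 < outDeg n E i := by
  have hmem : i + 1 ∈ (Finset.Icc 1 n).filter (fun v => E i v) := by
    simp only [Finset.mem_filter, Finset.mem_Icc]
    exact ⟨⟨by omega, by omega⟩, hpath i hi1 hin⟩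
  exact Finset.card_pos.mpr ⟨_, hmem⟩

lemma stat_eq {n : ℕ} {E : ℕ → ℕ → Bool} {φ : ℕ → ℝ} (hD : IsDigraph n E)
    (hφ : IsPerron n E φ)
    (hpath : ∀ i, 1 ≤ i → i < n → E i (i+1) = true)
    (hshort : dist E 1 n = n - 1)
    {i : ℕ} (hi1 : 1 ≤ i) (hin : i < n) :
    φ i / (outDeg n E i : ℝ) =
      φ (i+1) - ∑ u ∈ Finset.Icc (i+2) n,
        (if E u (i+1) then φ u / (outDeg n E u : ℝ) else 0) := by
  have hmem : i + 1 ∈ Finset.Icc 1 n := by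
    simp only [Finset.mem_Icc]; omega
  have hstat := hφ.2.2 (i+1) hmem
  have hsub : insert i (Finset.Icc (i+2) n) ⊆ Finset.Icc 1 n := by
    intro u hu
    simp only [Finset.mem_insert, Finset.mem_Icc] at hu
    simp only [Finset.mem_Icc]
    omega
  have hzero : ∀ u ∈ Finset.Icc 1 n, u ∉ insert i (Finset.Icc (i+2) n) →
      (if E u (i+1) then φ u / (outDeg n E u : ℝ) else 0) = 0 := by
    intro u hu hnot
    simp only [Finset.mem_Icc] at hu
    simp only [Finset.mem_insert, Finset.mem_Icc, not_or, not_and_or, not_le] at hnot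
    by_cases he : E u (i+1) = true
    · exfalso
      have hle := no_jump hD hpath hshort he
      have hne := (hD u (i+1) he).2.2
      omega
    · simp [he]
  have hsplit := Finset.sum_subset hsub hzero
  rw [Finset.sum_insert (by simp only [Finset.mem_Icc]; omega)] at hsplit
  rw [← hsplit] at hstat
  rw [if_pos (hpath i hi1 hin)] at hstat
  linarith

/-- If two digraphs `D, D′` on `{v_1,…,v_n}` (with `v_1,…,v_n` a shortest path
from `v_1` to `v_n` in both) agree, for all `s ≤ i ≤ n`, on out-degrees and on
in-neighborhoods from higher-indexed vertices, then `f_i = g_i` for `s ≤ i ≤ n`,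
where `f_i = φ(v_i)/φ(v_n)` and `g_i = ψ(v_i)/ψ(v_n)`. -/
theorem stmt7 (n : ℕ) (E E' : ℕ → ℕ → Bool) (φ ψ : ℕ → ℝ)
    (hD : IsDigraph n E) (hSC : StronglyConnected n E) (hφ : IsPerron n E φ)
    (hD' : IsDigraph n E') (hSC' : StronglyConnected n E') (hψ : IsPerron n E' ψ)
    (hpath : ∀ i, 1 ≤ i → i < n → E i (i+1) = true)
    (hshort : dist E 1 n = n - 1)
    (hpath' : ∀ i, 1 ≤ i → i < n → E' i (i+1) = true)
    (hshort' : dist E' 1 n = n - 1)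
    (s : ℕ) (hs : 1 ≤ s) (hsn : s ≤ n - 1)
    (hdeg : ∀ i, s ≤ i → i ≤ n → outDeg n E i = outDeg n E' i)
    (hnbr : ∀ k, s + 1 ≤ k → k ≤ n → ∀ i, k + 1 ≤ i → (E i k = true ↔ E' i k = true)) :
    ∀ i, s ≤ i → i ≤ n → φ i / φ n = ψ i / ψ n := by
  have hn2 : 2 ≤ n := by omega
  have hφn : (0:ℝ) < φ n := hφ.1 n (by simp only [Finset.mem_Icc]; omega)
  have hψn : (0:ℝ) < ψ n := hψ.1 n (by simp only [Finset.mem_Icc]; omega)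
  have key : ∀ m i, s ≤ i → i ≤ n → n - i = m → φ i / φ n = ψ i / ψ n := by
    intro m
    induction m using Nat.strong_induction_on with
    | _ m ih =>
      intro i hsi hin him
      rcases eq_or_lt_of_le hin with rfl | hlt
      · rw [div_self hφn.ne', div_self hψn.ne']
      · have hi1 : 1 ≤ i := le_trans hs hsi
        have h1 := stat_eq hD hφ hpath hshort hi1 hlt
        have h2 := stat_eq hD' hψ hpath' hshort' hi1 hlt
        have hd : outDeg n E i = outDeg n E' i := hdeg i hsi hin
        have hdpos := outDeg_pos hpath hi1 hlt
        have hdpos' := outDeg_pos hpath' hi1 hlt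
        have hdne : (outDeg n E i : ℝ) ≠ 0 := Nat.cast_ne_zero.mpr hdpos.ne'
        have hdne' : (outDeg n E' i : ℝ) ≠ 0 := Nat.cast_ne_zero.mpr hdpos'.ne'
        have hnext : φ (i+1) / φ n = ψ (i+1) / ψ n :=
          ih (n - (i+1)) (by omega) (i+1) (by omega) (by omega) rfl
        have hsum : ∑ u ∈ Finset.Icc (i+2) n,
              (if E u (i+1) then (φ u / φ n) / (outDeg n E u : ℝ) else 0)
            = ∑ u ∈ Finset.Icc (i+2) n,
              (if E' u (i+1) then (ψ u / ψ n) / (outDeg n E' u : ℝ) else 0) := by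
          apply Finset.sum_congr rfl
          intro u hu
          simp only [Finset.mem_Icc] at hu
          have hEE' : E u (i+1) = E' u (i+1) := by
            have h := hnbr (i+1) (by omega) (by omega) u (by omega)
            by_cases hb : E u (i+1) = true
            · rw [hb, (h.mp hb)]
            · have hb' : ¬ E' u (i+1) = true := fun hh => hb (h.mpr hh)
              rw [Bool.not_eq_true] at hb hb'
              rw [hb, hb']
          have hfu : φ u / φ n = ψ u / ψ n :=
            ih (n - u) (by omega) u (by omega) (by omega) rfl
          have hdu : outDeg n E u = outDeg n E' u := hdeg u (by omega) (by omega)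
          rw [hEE', hfu, hdu]
        have hSdiv : (∑ u ∈ Finset.Icc (i+2) n,
              (if E u (i+1) then φ u / (outDeg n E u : ℝ) else 0)) / φ n
            = ∑ u ∈ Finset.Icc (i+2) n,
              (if E u (i+1) then (φ u / φ n) / (outDeg n E u : ℝ) else 0) := by
          rw [Finset.sum_div]
          apply Finset.sum_congr rfl
          intro u _
          split
          · rw [div_div, div_div, mul_comm]
          · simp
        have hSdiv' : (∑ u ∈ Finset.Icc (i+2) n,
              (if E' u (i+1) then ψ u / (outDeg n E' u : ℝ) else 0)) / ψ n
            = ∑ u ∈ Finset.Icc (i+2) n,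
              (if E' u (i+1) then (ψ u / ψ n) / (outDeg n E' u : ℝ) else 0) := by
          rw [Finset.sum_div]
          apply Finset.sum_congr rfl
          intro u _
          split
          · rw [div_div, div_div, mul_comm]
          · simp
        have e1 : φ i / φ n = (outDeg n E i : ℝ) *
            (φ (i+1) / φ n - ∑ u ∈ Finset.Icc (i+2) n,
              (if E u (i+1) then (φ u / φ n) / (outDeg n E u : ℝ) else 0)) := by
          calc φ i / φ n = (outDeg n E i : ℝ) * ((φ i / (outDeg n E i : ℝ)) / φ n) := by
                field_simp
            _ = _ := by rw [h1, sub_div, hSdiv]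
        have e2 : ψ i / ψ n = (outDeg n E' i : ℝ) *
            (ψ (i+1) / ψ n - ∑ u ∈ Finset.Icc (i+2) n,
              (if E' u (i+1) then (ψ u / ψ n) / (outDeg n E' u : ℝ) else 0)) := by
          calc ψ i / ψ n = (outDeg n E' i : ℝ) * ((ψ i / (outDeg n E' i : ℝ)) / ψ n) := by
                field_simp
            _ = _ := by rw [h2, sub_div, hSdiv']
        rw [e1, e2, hd, hnext, hsum]
  intro i h1 h2
  exact key (n - i) i h1 h2 rfl


end PR
end
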